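/- Let α ∈ (0,1), p ∈ (1, 1/α), and let f₀(x) = x^{−1} · 1_{(1,∞)}(x) on (0,∞). Then ‖f₀‖_{L^p(0,∞)} = (p − 1)^{−1/p}, and there exists a constant c(α) > 0, independent of p, such that with q defined by 1/q = 1/p − α, ‖Γ(α) · I^α[f₀]‖_{L^q(0,∞)} ≥ c(α) · (p − 1)^{−1 − 1/q} for all p in a right neighborhood (1, 1 + δ(α)) of 1; consequently ‖I^α[f₀]‖_q / ‖f₀‖_p ≥ c'(α) · (p − 1)^{α − 1} as p → 1+. -/

import Mathlib

open MeasureTheory Real Set ENNReal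

/-- The Riemann–Liouville fractional integral
`I^α[φ](x) = (1/Γ(α)) ∫_0^x φ(t) (x-t)^{α-1} dt`. -/
noncomputable def fracInt (α : ℝ) (φ : ℝ → ℝ) (x : ℝ) : ℝ :=
  (1 / Real.Gamma α) * ∫ t in (0 : ℝ)..x, φ t * (x - t) ^ (α - 1)

lemma aux_lint {a c : ℝ} (ha : a < -1) (hc : 0 < c) :
    ∫⁻ x in Ioi c, ENNReal.ofReal (x ^ a) = ENNReal.ofReal (c ^ (a + 1) / (-(a + 1))) := by
  rw [← ofReal_integral_eq_lintegral_ofReal (integrableOn_Ioi_rpow_of_lt ha hc)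
    ((ae_restrict_iff' measurableSet_Ioi).2 (ae_of_all _ fun x hx =>
      Real.rpow_nonneg (le_of_lt (hc.trans hx)) a))]
  rw [integral_Ioi_rpow_of_lt ha hc]
  congr 1
  rw [div_neg, neg_div]

lemma part1 (α : ℝ) (hα : α ∈ Set.Ioo (0 : ℝ) 1) (p : ℝ) (hp : p ∈ Set.Ioo (1 : ℝ) (1 / α)) :
    eLpNorm (fun x => Set.indicator (Set.Ioi (1 : ℝ)) (fun y => y⁻¹) x)
        (ENNReal.ofReal p) (volume.restrict (Set.Ioi (0 : ℝ))) =
      ENNReal.ofReal ((p - 1) ^ (-(1 / p))) := by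
  have hp1 : 1 < p := hp.1
  have hp0 : 0 < p := by linarith
  have hne0 : ENNReal.ofReal p ≠ 0 := by simp [hp0, ENNReal.ofReal_pos]
  rw [eLpNorm_eq_lintegral_rpow_enorm_toReal hne0 ENNReal.ofReal_ne_top]
  rw [ENNReal.toReal_ofReal hp0.le]
  have h1 : ∀ x : ℝ, ((‖Set.indicator (Set.Ioi (1 : ℝ)) (fun y => y⁻¹) x‖ₑ : ℝ≥0∞)) ^ p =
      (Set.Ioi (1:ℝ)).indicator (fun x => ENNReal.ofReal (x ^ (-p))) x := by
    intro x
    by_cases hx : x ∈ Set.Ioi (1:ℝ)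
    · have hx1 : (1:ℝ) < x := hx
      have hx0 : (0:ℝ) < x := by linarith
      simp only [Set.indicator_of_mem hx]
      rw [Real.enorm_eq_ofReal (by positivity),
        ENNReal.ofReal_rpow_of_nonneg (by positivity) hp0.le]
      congr 1
      rw [Real.inv_rpow hx0.le, ← Real.rpow_neg hx0.le]
    · simp only [Set.indicator_of_notMem hx]
      simp [ENNReal.rpow_eq_zero_iff, hp0]
  simp_rw [h1]
  rw [lintegral_indicator measurableSet_Ioi, Measure.restrict_restrict measurableSet_Ioi,
    Set.inter_eq_self_of_subset_left (Set.Ioi_subset_Ioi zero_le_one)]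
  rw [aux_lint (by linarith : -p < -1) one_pos]
  have h2 : (1:ℝ) ^ (-p + 1) / (-(-p + 1)) = (p - 1)⁻¹ := by
    rw [Real.one_rpow]
    rw [show -(-p + 1) = p - 1 by ring, one_div]
  rw [h2, ENNReal.ofReal_rpow_of_nonneg (inv_nonneg.2 (by linarith)) (by positivity)]
  congr 1
  rw [Real.inv_rpow (by linarith), ← Real.rpow_neg (by linarith)]

lemma pointwise_low {α : ℝ} (hα : α ∈ Set.Ioo (0 : ℝ) 1) {x : ℝ} (hx : 2 < x) :
    x ^ (α - 1) * Real.log (x / 2) ≤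
      Real.Gamma α * fracInt α (fun y => Set.indicator (Set.Ioi (1 : ℝ)) (fun y => y⁻¹) y) x := by
  obtain ⟨hα0, hα1⟩ := hα
  have hΓ : Real.Gamma α ≠ 0 := (Real.Gamma_pos_of_pos hα0).ne'
  have h0x : (0:ℝ) ≤ x := by linarith
  have h1x : (1:ℝ) ≤ x := by linarith
  have h1x2 : (1:ℝ) ≤ x / 2 := by linarith
  set G : ℝ → ℝ := fun t => t⁻¹ * (x - t) ^ (α - 1) with hG
  have key : Real.Gamma α * fracInt α (fun y => Set.indicator (Set.Ioi (1 : ℝ)) (fun y => y⁻¹) y) x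
      = ∫ t in Ioc (1:ℝ) x, G t := by
    rw [fracInt, ← mul_assoc, mul_one_div, div_self hΓ, one_mul,
      intervalIntegral.integral_of_le h0x]
    rw [show (fun t => (Set.indicator (Set.Ioi (1 : ℝ)) (fun y => y⁻¹) t) * (x - t) ^ (α - 1))
        = fun t => Set.indicator (Set.Ioi (1 : ℝ)) G t from funext fun t => by
      by_cases ht : t ∈ Set.Ioi (1:ℝ) <;> simp [ht, hG]]
    rw [MeasureTheory.setIntegral_indicator measurableSet_Ioi, Set.Ioc_inter_Ioi,
      max_eq_right (zero_le_one)]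
  -- integrability of G on Ioc 1 x
  have hII : IntervalIntegrable G volume 1 x := by
    have h1 : IntervalIntegrable (fun t => (x - t) ^ (α - 1)) volume 1 x := by
      have := (intervalIntegral.intervalIntegrable_rpow' (a := x - 1) (b := x - x)
        (show (-1:ℝ) < α - 1 by linarith [hα1])).comp_sub_left x
      simpa using this
    apply h1.continuousOn_mul
    apply ContinuousOn.inv₀ continuousOn_id
    intro t ht
    rw [Set.uIcc_of_le h1x] at ht
    exact (lt_of_lt_of_le one_pos ht.1).ne'
  have hInt : IntegrableOn G (Ioc 1 x) volume :=
    (intervalIntegrable_iff_integrableOn_Ioc_of_le h1x).1 hII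
  have hnonneg : ∀ t ∈ Ioc (1:ℝ) x, 0 ≤ G t := fun t ht => by
    have h1 : (0:ℝ) ≤ x - t := by linarith [ht.2]
    have h2 : (0:ℝ) ≤ t := by linarith [ht.1]
    show (0:ℝ) ≤ t⁻¹ * (x - t) ^ (α - 1)
    positivity
  have step1 : ∫ t in Ioc (1:ℝ) (x/2), G t ≤ ∫ t in Ioc (1:ℝ) x, G t := by
    apply setIntegral_mono_set hInt
    · exact (ae_restrict_iff' measurableSet_Ioc).2 (ae_of_all _ hnonneg)
    · exact (Set.Ioc_subset_Ioc_right (by linarith)).eventuallyLE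
  have hInt2 : IntegrableOn (fun t => t⁻¹ * x ^ (α - 1)) (Ioc 1 (x/2)) volume := by
    apply (ContinuousOn.integrableOn_Icc ?_).mono_set Set.Ioc_subset_Icc_self
    apply ContinuousOn.mul ?_ continuousOn_const
    exact ContinuousOn.inv₀ continuousOn_id fun t ht => (lt_of_lt_of_le one_pos ht.1).ne'
  have step2 : ∫ t in Ioc (1:ℝ) (x/2), t⁻¹ * x ^ (α - 1) ≤ ∫ t in Ioc (1:ℝ) (x/2), G t := by
    apply setIntegral_mono_on hInt2 (hInt.mono_set (Set.Ioc_subset_Ioc_right (by linarith)))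
      measurableSet_Ioc
    intro t ht
    have ht1 : (1:ℝ) < t := ht.1
    have htx : t ≤ x / 2 := ht.2
    have hxt : (0:ℝ) < x - t := by linarith
    apply mul_le_mul_of_nonneg_left _ (by positivity)
    exact Real.rpow_le_rpow_of_nonpos hxt (by linarith) (by linarith)
  have step3 : ∫ t in Ioc (1:ℝ) (x/2), t⁻¹ * x ^ (α - 1)
      = Real.log (x / 2) * x ^ (α - 1) := by
    rw [MeasureTheory.integral_mul_const]
    congr 1
    rw [← intervalIntegral.integral_of_le h1x2, integral_inv_of_pos one_pos (by linarith),
      div_one]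
  rw [key, mul_comm]
  calc Real.log (x / 2) * x ^ (α - 1) = _ := step3.symm
    _ ≤ _ := step2
    _ ≤ _ := step1

set_option maxHeartbeats 1000000 in
lemma part2 (α : ℝ) (hα : α ∈ Set.Ioo (0 : ℝ) 1) :
    ∃ c : ℝ, 0 < c ∧ ∃ δ : ℝ, 0 < δ ∧
      ∀ p q : ℝ, p ∈ Set.Ioo (1 : ℝ) (1 + δ) → p < 1 / α → 1 / q = 1 / p - α →
        ENNReal.ofReal (c * (p - 1) ^ (-1 - 1 / q)) ≤
          eLpNorm (fun x => Real.Gamma α *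
              fracInt α (fun y => Set.indicator (Set.Ioi (1 : ℝ)) (fun y => y⁻¹) y) x)
            (ENNReal.ofReal q) (volume.restrict (Set.Ioi (0 : ℝ))) := by
  obtain ⟨hα0, hα1⟩ := hα
  set Q : ℝ := 2 / (1 - α) with hQdef
  have hQ0 : 0 < Q := div_pos two_pos (by linarith)
  have hQ1 : 1 ≤ Q := by rw [hQdef, le_div_iff₀ (by linarith)]; linarith
  have h2e : (1:ℝ) ≤ 2 * Real.exp 1 := by nlinarith [Real.add_one_le_exp (1:ℝ)]
  set c : ℝ := (2 * Real.exp 1)⁻¹ * Q ^ (-2 : ℝ) with hcdef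
  have hc0 : 0 < c := mul_pos (by positivity) (Real.rpow_pos_of_pos hQ0 _)
  refine ⟨c, hc0, (1 - α) / 2, by linarith, fun p q hp hpα hq => ?_⟩
  obtain ⟨hp1, hp2⟩ := hp
  have hp0 : 0 < p := by linarith
  have hαp : α * p < 1 := by
    have := (lt_div_iff₀ hα0).1 hpα; linarith [this]
  have hpa : 0 < 1 / p - α := by
    rw [sub_pos, lt_div_iff₀ hp0]; linarith
  have h1q : 0 < 1 / q := by rw [hq]; exact hpa
  have hq0 : 0 < q := one_div_pos.1 h1q
  have h1q1 : 1 / q ≤ 1 := by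
    rw [hq]
    have : 1 / p ≤ 1 := by rw [div_le_one hp0]; linarith
    linarith
  have hq1 : 1 ≤ q := by rwa [div_le_one hq0] at h1q1
  have hqe : q * (1 - α * p) = p := by
    field_simp at hq
    linarith [hq]
  set β : ℝ := -((α - 1) * q + 1) with hβdef
  have hβeq : β * (1 - α * p) = p - 1 := by
    rw [hβdef]; linear_combination (1 - α) * hqe
  have hβ0 : 0 < β := by nlinarith [hβeq, hαp, hp1]
  have h1αp : (1 - α) / 2 ≤ 1 - α * p := by nlinarith
  have hβle : β * (1 - α) ≤ 2 * (p - 1) := by nlinarith [mul_le_mul_of_nonneg_left h1αp hβ0.le]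
  have hβ1 : β ≤ 1 := by nlinarith
  have hβQ : β ≤ Q * (p - 1) := by
    rw [hQdef, div_mul_eq_mul_div, le_div_iff₀ (by linarith)]; linarith
  set R : ℝ := 2 * Real.exp (1 / β) with hRdef
  have hR2 : 2 < R := by
    rw [hRdef]
    nlinarith [Real.add_one_le_exp (1 / β), one_div_pos.2 hβ0]
  have hR0 : 0 < R := by linarith
  have hqne0 : ENNReal.ofReal q ≠ 0 := by simp [hq0, ENNReal.ofReal_pos]
  rw [eLpNorm_eq_lintegral_rpow_enorm_toReal hqne0 ENNReal.ofReal_ne_top,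
    ENNReal.toReal_ofReal hq0.le]
  set g : ℝ → ℝ := fun x => Real.Gamma α *
      fracInt α (fun y => Set.indicator (Set.Ioi (1 : ℝ)) (fun y => y⁻¹) y) x with hgdef
  have hpw : ∀ x ∈ Ioi R, ENNReal.ofReal (x ^ ((α - 1) * q)) * ENNReal.ofReal (β ^ (-q))
      ≤ (‖g x‖₊ : ℝ≥0∞) ^ q := by
    intro x hx
    have hxR : R < x := hx
    have hx2 : 2 < x := by linarith
    have hx0 : 0 < x := by linarith
    have hlog : 1 / β ≤ Real.log (x / 2) := by
      rw [Real.le_log_iff_exp_le (by linarith)]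
      rw [hRdef] at hxR; linarith
    have hgx : x ^ (α - 1) * β⁻¹ ≤ g x := by
      refine le_trans ?_ (pointwise_low ⟨hα0, hα1⟩ hx2)
      rw [← one_div β]
      exact mul_le_mul_of_nonneg_left hlog (by positivity)
    have hL0 : (0:ℝ) ≤ x ^ (α - 1) * β⁻¹ := by positivity
    have hg0 : (0:ℝ) ≤ g x := le_trans (by positivity) hgx
    have hreal : (x ^ (α - 1) * β⁻¹) ^ q = x ^ ((α - 1) * q) * β ^ (-q) := by
      rw [Real.mul_rpow (by positivity) (by positivity), ← Real.rpow_mul hx0.le,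
        Real.inv_rpow hβ0.le, ← Real.rpow_neg hβ0.le]
    rw [← ENNReal.ofReal_mul (by positivity), ← hreal]
    calc ENNReal.ofReal ((x ^ (α - 1) * β⁻¹) ^ q)
        ≤ ENNReal.ofReal (g x) ^ q := by
          rw [ENNReal.ofReal_rpow_of_nonneg hg0 hq0.le]
          exact ENNReal.ofReal_le_ofReal (Real.rpow_le_rpow hL0 hgx hq0.le)
      _ ≤ (‖g x‖₊ : ℝ≥0∞) ^ q := by
          gcongr
          exact Real.ofReal_le_enorm _
  have lb1 : (∫⁻ x in Ioi R, ENNReal.ofReal (x ^ ((α - 1) * q)) * ENNReal.ofReal (β ^ (-q)))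
      ≤ ∫⁻ x in Ioi (0:ℝ), (‖g x‖₊ : ℝ≥0∞) ^ q :=
    le_trans (setLIntegral_mono' measurableSet_Ioi hpw)
      (lintegral_mono_set (Ioi_subset_Ioi hR0.le))
  have hexp : (α - 1) * q < -1 := by
    have : (α - 1) * q + 1 = -β := by rw [hβdef]; ring
    linarith
  set D : ℝ := R ^ (-β) / β * β ^ (-q) with hDdef
  have lb2 : (∫⁻ x in Ioi R, ENNReal.ofReal (x ^ ((α - 1) * q)) * ENNReal.ofReal (β ^ (-q)))
      = ENNReal.ofReal D := by
    rw [lintegral_mul_const' _ _ ENNReal.ofReal_ne_top, aux_lint hexp hR0,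
      ← ENNReal.ofReal_mul (by positivity), hDdef]
    congr 3
    rw [show (α - 1) * q + 1 = -β by rw [hβdef]; ring, neg_neg]
  have hsplit : β ^ (-(1 + q)) = β⁻¹ * β ^ (-q) := by
    rw [show -(1 + q) = -1 + -q by ring, Real.rpow_add hβ0, Real.rpow_neg_one]
  have hD : (2 * Real.exp 1)⁻¹ * β ^ (-(1 + q)) ≤ D := by
    have hRβ : (2 * Real.exp 1)⁻¹ ≤ R ^ (-β) := by
      rw [hRdef, Real.mul_rpow (by norm_num) (Real.exp_pos _).le, ← Real.exp_mul,
        show 1 / β * -β = -1 by field_simp, Real.exp_neg, mul_inv]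
      have h2β : (2:ℝ)⁻¹ ≤ 2 ^ (-β) := by
        rw [show ((2:ℝ)⁻¹) = 2 ^ (-1 : ℝ) by rw [Real.rpow_neg_one]]
        exact Real.rpow_le_rpow_of_exponent_le one_le_two (by linarith)
      exact mul_le_mul_of_nonneg_right h2β (by positivity)
    have hDeq : D = R ^ (-β) * (β⁻¹ * β ^ (-q)) := by rw [hDdef]; ring
    rw [hDeq, hsplit]
    exact mul_le_mul_of_nonneg_right hRβ (by positivity)
  have hD0 : (0:ℝ) ≤ D := le_trans (by positivity) hD
  have hreal2 : c * (p - 1) ^ (-1 - 1/q) ≤ D ^ (1/q) := by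
    have e1 : ((2 * Real.exp 1)⁻¹ * β ^ (-(1 + q))) ^ (1/q) ≤ D ^ (1/q) :=
      Real.rpow_le_rpow (by positivity) hD (by positivity)
    have e2 : ((2 * Real.exp 1)⁻¹ * β ^ (-(1 + q))) ^ (1/q)
        = ((2 * Real.exp 1)⁻¹) ^ (1/q) * β ^ (-1 - 1/q) := by
      have hE : -(1 + q) * (1/q) = -1 - 1/q := by
        rw [mul_one_div, neg_div, add_div, div_self hq0.ne']
        ring
      rw [Real.mul_rpow (by positivity) (by positivity), ← Real.rpow_mul hβ0.le, hE]
    have e3 : (2 * Real.exp 1)⁻¹ ≤ ((2 * Real.exp 1)⁻¹) ^ (1/q) := by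
      have := Real.rpow_le_rpow_of_exponent_ge (x := (2 * Real.exp 1)⁻¹) (by positivity)
        (by rw [inv_le_one_iff₀]; right; exact h2e) h1q1
      rwa [Real.rpow_one] at this
    have e4 : Q ^ (-2:ℝ) * (p - 1) ^ (-1 - 1/q) ≤ β ^ (-1 - 1/q) := by
      have h1 : (Q * (p - 1)) ^ (-1 - 1/q) ≤ β ^ (-1 - 1/q) :=
        Real.rpow_le_rpow_of_nonpos hβ0 hβQ (by linarith)
      have h2 : (Q * (p - 1)) ^ (-1 - 1/q) = Q ^ (-1 - 1/q) * (p - 1) ^ (-1 - 1/q) :=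
        Real.mul_rpow hQ0.le (by linarith)
      have h3 : Q ^ (-2:ℝ) ≤ Q ^ (-1 - 1/q) :=
        Real.rpow_le_rpow_of_exponent_le hQ1 (by linarith)
      calc Q ^ (-2:ℝ) * (p - 1) ^ (-1 - 1/q)
          ≤ Q ^ (-1 - 1/q) * (p - 1) ^ (-1 - 1/q) :=
            mul_le_mul_of_nonneg_right h3 (Real.rpow_nonneg (by linarith) _)
        _ = (Q * (p - 1)) ^ (-1 - 1/q) := h2.symm
        _ ≤ β ^ (-1 - 1/q) := h1
    calc c * (p - 1) ^ (-1 - 1/q)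
        = (2 * Real.exp 1)⁻¹ * (Q ^ (-2:ℝ) * (p - 1) ^ (-1 - 1/q)) := by
          rw [hcdef]; ring
      _ ≤ ((2 * Real.exp 1)⁻¹) ^ (1/q) * (β ^ (-1 - 1/q)) :=
          mul_le_mul e3 e4 (mul_nonneg (Real.rpow_nonneg hQ0.le _)
            (Real.rpow_nonneg (by linarith) _)) (by positivity)
      _ = ((2 * Real.exp 1)⁻¹ * β ^ (-(1 + q))) ^ (1/q) := e2.symm
      _ ≤ D ^ (1/q) := e1
  calc ENNReal.ofReal (c * (p - 1) ^ (-1 - 1/q))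
      ≤ ENNReal.ofReal (D ^ (1/q)) := ENNReal.ofReal_le_ofReal hreal2
    _ = ENNReal.ofReal D ^ (1/q) := (ENNReal.ofReal_rpow_of_nonneg hD0 (by positivity)).symm
    _ ≤ (∫⁻ x in Ioi (0:ℝ), (‖g x‖₊ : ℝ≥0∞) ^ q) ^ (1/q) :=
      ENNReal.rpow_le_rpow (lb2 ▸ lb1) (by positivity)

/-- Test function computation for the blow-up of `K_{I,α}(p)` as `p → 1+`:
for `f₀(x) = x⁻¹ 1_{(1,∞)}(x)` one has `‖f₀‖_p = (p-1)^{-1/p}`, and for `p` near `1`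
(with `1/q = 1/p - α`) `‖Γ(α) I^α[f₀]‖_q ≥ c (p-1)^{-1-1/q}`, whence
`‖I^α f₀‖_q ≥ c' (p-1)^{α-1} ‖f₀‖_p`. -/
theorem stmt_17 (α : ℝ) (hα : α ∈ Set.Ioo (0 : ℝ) 1) :
    let f₀ : ℝ → ℝ := fun x => Set.indicator (Set.Ioi (1 : ℝ)) (fun y => y⁻¹) x
    (∀ p : ℝ, p ∈ Set.Ioo (1 : ℝ) (1 / α) →
      eLpNorm f₀ (ENNReal.ofReal p) (volume.restrict (Set.Ioi (0 : ℝ))) =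
        ENNReal.ofReal ((p - 1) ^ (-(1 / p)))) ∧
    (∃ c : ℝ, 0 < c ∧ ∃ δ : ℝ, 0 < δ ∧
      ∀ p q : ℝ, p ∈ Set.Ioo (1 : ℝ) (1 + δ) → p < 1 / α → 1 / q = 1 / p - α →
        ENNReal.ofReal (c * (p - 1) ^ (-1 - 1 / q)) ≤
          eLpNorm (fun x => Real.Gamma α * fracInt α f₀ x) (ENNReal.ofReal q)
            (volume.restrict (Set.Ioi (0 : ℝ)))) ∧
    (∃ c' : ℝ, 0 < c' ∧ ∃ δ' : ℝ, 0 < δ' ∧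
      ∀ p q : ℝ, p ∈ Set.Ioo (1 : ℝ) (1 + δ') → p < 1 / α → 1 / q = 1 / p - α →
        ENNReal.ofReal (c' * (p - 1) ^ (α - 1)) *
            eLpNorm f₀ (ENNReal.ofReal p) (volume.restrict (Set.Ioi (0 : ℝ))) ≤
          eLpNorm (fracInt α f₀) (ENNReal.ofReal q)
            (volume.restrict (Set.Ioi (0 : ℝ)))) := by
  intro f₀
  obtain ⟨c, hc0, δ, hδ0, h2⟩ := part2 α hα
  have hΓ0 : 0 < Real.Gamma α := Real.Gamma_pos_of_pos hα.1
  refine ⟨fun p hp => part1 α hα p hp, ⟨c, hc0, δ, hδ0, h2⟩, ?_⟩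
  refine ⟨c / Real.Gamma α, div_pos hc0 hΓ0, δ, hδ0, fun p q hp hpα hq => ?_⟩
  have hp1 : 1 < p := hp.1
  have hp0 : 0 < p := by linarith
  -- rewrite the f₀ norm by part 1
  rw [part1 α hα p ⟨hp1, hpα⟩]
  have hΓsmul : eLpNorm (fun x => Real.Gamma α * fracInt α f₀ x) (ENNReal.ofReal q)
      (volume.restrict (Set.Ioi (0 : ℝ)))
      = ENNReal.ofReal (Real.Gamma α) * eLpNorm (fracInt α f₀) (ENNReal.ofReal q)
        (volume.restrict (Set.Ioi (0 : ℝ))) := by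
    rw [show (fun x => Real.Gamma α * fracInt α f₀ x) = Real.Gamma α • fracInt α f₀ from rfl,
      eLpNorm_const_smul]
    congr 1
    exact Real.enorm_eq_ofReal hΓ0.le
  have key := h2 p q hp hpα hq
  rw [hΓsmul] at key
  have hexp : α - 1 + -(1/p) = -1 - 1/q := by rw [hq]; ring
  calc ENNReal.ofReal (c / Real.Gamma α * (p - 1) ^ (α - 1)) *
        ENNReal.ofReal ((p - 1) ^ (-(1 / p)))
      = ENNReal.ofReal ((Real.Gamma α)⁻¹) * ENNReal.ofReal (c * (p - 1) ^ (-1 - 1/q)) := by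
        rw [← ENNReal.ofReal_mul (mul_nonneg (div_nonneg hc0.le hΓ0.le)
            (Real.rpow_nonneg (by linarith) _)),
          ← ENNReal.ofReal_mul (inv_nonneg.2 hΓ0.le)]
        congr 1
        rw [div_eq_mul_inv, mul_assoc, mul_assoc, ← Real.rpow_add (by linarith : (0:ℝ) < p - 1),
          hexp]
        ring
    _ ≤ ENNReal.ofReal ((Real.Gamma α)⁻¹) * (ENNReal.ofReal (Real.Gamma α) *
        eLpNorm (fracInt α f₀) (ENNReal.ofReal q) (volume.restrict (Set.Ioi (0 : ℝ)))) :=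
        mul_le_mul_right key _
    _ = eLpNorm (fracInt α f₀) (ENNReal.ofReal q) (volume.restrict (Set.Ioi (0 : ℝ))) := by
        rw [← mul_assoc, ← ENNReal.ofReal_mul (by positivity),
          inv_mul_cancel₀ hΓ0.ne', ENNReal.ofReal_one, one_mul]
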